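/- Let σ > 0, R > 0, and let n ≥ 1 be a natural number. For ȳ ∈ ℝ set a(ȳ) = −√n(R+ȳ)/σ and b(ȳ) = √n(R−ȳ)/σ. Then ∫_ℝ (1/(2R)) · (σ²/n) · [ (Φ(b(ȳ)) − Φ(a(ȳ))) − (b(ȳ)φ(b(ȳ)) − a(ȳ)φ(a(ȳ))) − (φ(b(ȳ)) − φ(a(ȳ)))²/(Φ(b(ȳ)) − Φ(a(ȳ))) ] dȳ ≥ (σ²/n) · (1 − 4σ/(√n·R)). -/

import Mathlib

open MeasureTheory Real Set

/-- The standard normal density. -/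
noncomputable def gaussPdf (x : ℝ) : ℝ :=
  (Real.sqrt (2 * Real.pi))⁻¹ * Real.exp (-(x ^ 2) / 2)

/-- The standard normal CDF. -/
noncomputable def gaussCdf (x : ℝ) : ℝ :=
  ∫ t in Set.Iic x, gaussPdf t

noncomputable def brak (a b : ℝ) : ℝ :=
  (gaussCdf b - gaussCdf a) - (b * gaussPdf b - a * gaussPdf a)
    - (gaussPdf b - gaussPdf a) ^ 2 / (gaussCdf b - gaussCdf a)


lemma sqrt2pi_pos : 0 < Real.sqrt (2 * Real.pi) :=
  Real.sqrt_pos.2 (by positivity)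

lemma gaussPdf_pos (x : ℝ) : 0 < gaussPdf x := by
  unfold gaussPdf; positivity

lemma gaussPdf_nonneg (x : ℝ) : 0 ≤ gaussPdf x := (gaussPdf_pos x).le

lemma continuous_gaussPdf : Continuous gaussPdf := by
  unfold gaussPdf; continuity

lemma gaussPdf_neg (x : ℝ) : gaussPdf (-x) = gaussPdf x := by
  unfold gaussPdf; ring_nf

lemma gaussPdf_le (x : ℝ) : gaussPdf x ≤ (Real.sqrt (2 * Real.pi))⁻¹ := by
  unfold gaussPdf
  have : Real.exp (-(x ^ 2) / 2) ≤ 1 := by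
    rw [Real.exp_le_one_iff]; nlinarith [sq_nonneg x]
  nlinarith [this, inv_pos.2 sqrt2pi_pos]

lemma gaussPdf_anti {x y : ℝ} (h : |x| ≤ |y|) : gaussPdf y ≤ gaussPdf x := by
  unfold gaussPdf
  have hx : x^2 ≤ y^2 := by nlinarith [abs_nonneg x, sq_abs x, sq_abs y]
  have := Real.exp_le_exp.2 (by linarith : -(y^2)/2 ≤ -(x^2)/2)
  nlinarith [inv_pos.2 sqrt2pi_pos]

lemma integrable_gaussPdf : Integrable gaussPdf := by
  have h : Integrable (fun x : ℝ => Real.exp (-(1/2 : ℝ) * x ^ 2)) := integrable_exp_neg_mul_sq (by norm_num)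
  have := h.const_mul (Real.sqrt (2 * Real.pi))⁻¹
  refine this.congr (Filter.Eventually.of_forall fun x => ?_)
  unfold gaussPdf
  ring_nf

lemma integral_gaussPdf : ∫ x, gaussPdf x = 1 := by
  unfold gaussPdf
  rw [MeasureTheory.integral_const_mul]
  have : ∀ x : ℝ, Real.exp (-(x^2)/2) = Real.exp (-(1/2 : ℝ) * x ^ 2) := fun x => by ring_nf
  simp_rw [this]
  rw [integral_gaussian]
  rw [show Real.pi / (1/2) = 2 * Real.pi by ring]
  rw [inv_mul_cancel₀ sqrt2pi_pos.ne']

lemma gaussCdf_sub {a b : ℝ} (hab : a ≤ b) :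
    gaussCdf b - gaussCdf a = ∫ t in Set.Ioc a b, gaussPdf t := by
  unfold gaussCdf
  rw [← Set.Iic_union_Ioc_eq_Iic hab,
    MeasureTheory.setIntegral_union (Set.Iic_disjoint_Ioc le_rfl) measurableSet_Ioc
      integrable_gaussPdf.integrableOn integrable_gaussPdf.integrableOn]
  ring

lemma gaussCdf_interval {a b : ℝ} (hab : a ≤ b) :
    gaussCdf b - gaussCdf a = ∫ t in a..b, gaussPdf t := by
  rw [gaussCdf_sub hab, intervalIntegral.integral_of_le hab]

lemma one_sub_gaussCdf (b : ℝ) : 1 - gaussCdf b = ∫ t in Set.Ioi b, gaussPdf t := by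
  unfold gaussCdf
  have := MeasureTheory.setIntegral_union (f := gaussPdf) (μ := volume)
    (Set.Iic_disjoint_Ioi (le_refl b)) measurableSet_Ioi
    integrable_gaussPdf.integrableOn integrable_gaussPdf.integrableOn
  rw [Set.Iic_union_Ioi] at this
  rw [← integral_gaussPdf]
  rw [show ∫ (x:ℝ), gaussPdf x = ∫ x in Set.univ, gaussPdf x by rw [MeasureTheory.setIntegral_univ]]
  linarith [this]

lemma gaussCdf_eq_primitive (x : ℝ) :
    gaussCdf x = gaussCdf 0 + ∫ t in (0:ℝ)..x, gaussPdf t := by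
  rcases le_total 0 x with h | h
  · rw [← gaussCdf_interval h]; ring
  · rw [intervalIntegral.integral_symm, ← gaussCdf_interval h]; ring

lemma continuous_gaussCdf : Continuous gaussCdf := by
  have : Continuous fun x => gaussCdf 0 + ∫ t in (0:ℝ)..x, gaussPdf t :=
    continuous_const.add (integrable_gaussPdf.continuous_primitive 0)
  exact this.congr fun x => (gaussCdf_eq_primitive x).symm

lemma hasDerivAt_neg_gaussPdf (t : ℝ) :
    HasDerivAt (fun u => -gaussPdf u) (t * gaussPdf t) t := by
  have h : HasDerivAt (fun u : ℝ => -(u ^ 2) / 2) (-t) t := by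
    have := ((hasDerivAt_pow 2 t).neg).div_const 2
    simpa using this.congr_deriv (by ring)
  have h2 := (h.exp).const_mul (Real.sqrt (2 * Real.pi))⁻¹
  have h3 := h2.neg
  have : HasDerivAt (fun u : ℝ => -((Real.sqrt (2 * Real.pi))⁻¹ * Real.exp (-(u ^ 2) / 2)))
      (t * gaussPdf t) t := by
    have heq : -((Real.sqrt (2 * Real.pi))⁻¹ * (Real.exp (-(t ^ 2) / 2) * -t)) = t * gaussPdf t := by
      unfold gaussPdf; ring
    rw [← heq]
    convert h3 using 2 with u
    all_goals rfl
  exact this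

lemma integral_t_gaussPdf (a b : ℝ) :
    ∫ t in a..b, t * gaussPdf t = gaussPdf a - gaussPdf b := by
  have h := intervalIntegral.integral_eq_sub_of_hasDerivAt
    (fun t _ => hasDerivAt_neg_gaussPdf t)
    ((continuous_id.mul continuous_gaussPdf).intervalIntegrable a b)
  rw [show (fun t => t * gaussPdf t) = fun y => y * gaussPdf y from rfl] at h
  linarith [h]

lemma hasDerivAt_neg_mul_gaussPdf (t : ℝ) :
    HasDerivAt (fun u => -(u * gaussPdf u)) ((t ^ 2 - 1) * gaussPdf t) t := by
  have h1 : HasDerivAt (fun u : ℝ => u) 1 t := hasDerivAt_id t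
  have h2 : HasDerivAt gaussPdf (-(t * gaussPdf t)) t := by
    have := (hasDerivAt_neg_gaussPdf t).neg
    simpa [Pi.neg_def] using this
  have := (h1.mul h2).neg
  refine this.congr_deriv ?_
  ring

lemma integral_t2_gaussPdf (a b : ℝ) :
    ∫ t in a..b, t ^ 2 * gaussPdf t
      = (∫ t in a..b, gaussPdf t) + (a * gaussPdf a - b * gaussPdf b) := by
  have h := intervalIntegral.integral_eq_sub_of_hasDerivAt
    (fun t _ => hasDerivAt_neg_mul_gaussPdf t)
    (((continuous_id.pow 2).sub continuous_const).mul continuous_gaussPdf |>.intervalIntegrable a b)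
  have hsplit : ∫ t in a..b, (t ^ 2 - 1) * gaussPdf t
      = (∫ t in a..b, t ^ 2 * gaussPdf t) - ∫ t in a..b, gaussPdf t := by
    have e1 : IntervalIntegrable (fun t : ℝ => t ^ 2 * gaussPdf t) volume a b := by
      exact Continuous.intervalIntegrable ((continuous_pow 2).mul continuous_gaussPdf) a b
    rw [← intervalIntegral.integral_sub e1 (continuous_gaussPdf.intervalIntegrable a b)]
    congr 1; ext t; ring
  rw [hsplit] at h
  linarith [h]

lemma integral_exp_shift_Ioi (b : ℝ) :
    ∫ t in Set.Ioi b, Real.exp (-((t - b) ^ 2) / 2) = Real.sqrt (2 * Real.pi) / 2 := by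
  have hemb : MeasurableEmbedding (fun x : ℝ => x + b) :=
    (MeasurableEquiv.addRight b).measurableEmbedding
  have hmp : MeasurePreserving (fun x : ℝ => x + b) volume volume :=
    measurePreserving_add_right volume b
  have hpre : (fun x : ℝ => x + b) ⁻¹' Set.Ioi b = Set.Ioi 0 := by
    ext x; simp
  have h := hmp.setIntegral_preimage_emb hemb
    (fun t => Real.exp (-((t - b) ^ 2) / 2)) (Set.Ioi b)
  rw [hpre] at h
  simp only [add_sub_cancel_right] at h
  rw [← h]
  have : ∀ x : ℝ, Real.exp (-(x ^ 2) / 2) = Real.exp (-(1/2 : ℝ) * x ^ 2) := fun x => by ring_nf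
  simp_rw [this]
  rw [integral_gaussian_Ioi]
  rw [show Real.pi / (1/2) = 2 * Real.pi by ring]

lemma tail_hi_le {b : ℝ} (hb : 0 ≤ b) :
    ∫ t in Set.Ioi b, gaussPdf t ≤ Real.exp (-(b ^ 2) / 2) / 2 := by
  have hbd : ∀ t ∈ Set.Ioi b, gaussPdf t ≤
      Real.exp (-(b ^ 2) / 2) * ((Real.sqrt (2 * Real.pi))⁻¹ * Real.exp (-((t - b) ^ 2) / 2)) := by
    intro t ht
    simp only [Set.mem_Ioi] at ht
    unfold gaussPdf
    rw [show Real.exp (-(b ^ 2) / 2) * ((Real.sqrt (2 * Real.pi))⁻¹ * Real.exp (-((t - b) ^ 2) / 2))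
      = (Real.sqrt (2 * Real.pi))⁻¹ * Real.exp (-(b ^ 2) / 2 + -((t - b) ^ 2) / 2) by
        rw [Real.exp_add]; ring]
    have : -(t ^ 2) / 2 ≤ -(b ^ 2) / 2 + -((t - b) ^ 2) / 2 := by nlinarith
    have := Real.exp_le_exp.2 this
    nlinarith [inv_pos.2 sqrt2pi_pos]
  have hint : IntegrableOn (fun t => Real.exp (-(b ^ 2) / 2) *
      ((Real.sqrt (2 * Real.pi))⁻¹ * Real.exp (-((t - b) ^ 2) / 2))) (Set.Ioi b) := by
    have : Integrable (fun t : ℝ => Real.exp (-(1/2:ℝ) * (t - b) ^ 2)) := by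
      exact (integrable_exp_neg_mul_sq (by norm_num)).comp_sub_right b
    have h2 := (this.const_mul (Real.exp (-(b ^ 2) / 2) * (Real.sqrt (2 * Real.pi))⁻¹)).integrableOn
      (s := Set.Ioi b)
    refine h2.congr_fun (fun t _ => ?_) measurableSet_Ioi
    ring_nf
  calc ∫ t in Set.Ioi b, gaussPdf t
      ≤ ∫ t in Set.Ioi b, Real.exp (-(b ^ 2) / 2) *
          ((Real.sqrt (2 * Real.pi))⁻¹ * Real.exp (-((t - b) ^ 2) / 2)) := by
        refine MeasureTheory.setIntegral_mono_on
          (integrable_gaussPdf.integrableOn) hint measurableSet_Ioi hbd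
    _ = Real.exp (-(b ^ 2) / 2) * (Real.sqrt (2 * Real.pi))⁻¹ *
          ∫ t in Set.Ioi b, Real.exp (-((t - b) ^ 2) / 2) := by
        rw [← MeasureTheory.integral_const_mul]; congr 1; ext t; ring
    _ = Real.exp (-(b ^ 2) / 2) / 2 := by
        rw [integral_exp_shift_Ioi]
        field_simp

lemma tail_lo_le {a : ℝ} (ha : a ≤ 0) :
    ∫ t in Set.Iic a, gaussPdf t ≤ Real.exp (-(a ^ 2) / 2) / 2 := by
  have hmp : MeasurePreserving (fun x : ℝ => -x) volume volume :=
    Measure.measurePreserving_neg volume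
  have hemb : MeasurableEmbedding (fun x : ℝ => -x) :=
    (Homeomorph.neg ℝ).measurableEmbedding
  have h := hmp.setIntegral_preimage_emb hemb gaussPdf (Set.Iic a)
  have hpre : (fun x : ℝ => -x) ⁻¹' Set.Iic a = Set.Ici (-a) := by
    ext x; simp [le_neg]
  rw [hpre] at h
  simp_rw [gaussPdf_neg] at h
  rw [← h, MeasureTheory.integral_Ici_eq_integral_Ioi]
  have := tail_hi_le (b := -a) (by linarith)
  simpa using this

lemma I0_pos {a b : ℝ} (hab : a < b) : 0 < ∫ t in a..b, gaussPdf t := by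
  apply intervalIntegral.intervalIntegral_pos_of_pos_on
    (continuous_gaussPdf.intervalIntegrable a b) (fun x _ => gaussPdf_pos x) hab

lemma cauchy_schwarz_interval {a b : ℝ} (hab : a < b) :
    (∫ t in a..b, t * gaussPdf t) ^ 2
      ≤ (∫ t in a..b, gaussPdf t) * (∫ t in a..b, t ^ 2 * gaussPdf t) := by
  set I0 := ∫ t in a..b, gaussPdf t with hI0
  set I1 := ∫ t in a..b, t * gaussPdf t with hI1
  set I2 := ∫ t in a..b, t ^ 2 * gaussPdf t with hI2
  have h0 : 0 < I0 := I0_pos hab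
  set lam := I1 / I0 with hlam
  have hnn : 0 ≤ ∫ t in a..b, (t - lam) ^ 2 * gaussPdf t := by
    apply intervalIntegral.integral_nonneg hab.le
    intro u _
    exact mul_nonneg (sq_nonneg _) (gaussPdf_nonneg u)
  have hexp : ∫ t in a..b, (t - lam) ^ 2 * gaussPdf t
      = I2 - 2 * lam * I1 + lam ^ 2 * I0 := by
    have e2 : IntervalIntegrable (fun t : ℝ => t ^ 2 * gaussPdf t) volume a b :=
      Continuous.intervalIntegrable ((continuous_pow 2).mul continuous_gaussPdf) a b
    have e1 : IntervalIntegrable (fun t : ℝ => (2 * lam * t) * gaussPdf t) volume a b :=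
      Continuous.intervalIntegrable ((continuous_const.mul continuous_id).mul continuous_gaussPdf) a b
    have e0 : IntervalIntegrable (fun t : ℝ => lam ^ 2 * gaussPdf t) volume a b :=
      Continuous.intervalIntegrable (continuous_const.mul continuous_gaussPdf) a b
    have : (fun t : ℝ => (t - lam) ^ 2 * gaussPdf t)
        = fun t : ℝ => (t ^ 2 * gaussPdf t - (2 * lam * t) * gaussPdf t)
            + lam ^ 2 * gaussPdf t := by
      ext t; ring
    rw [this, intervalIntegral.integral_add (e2.sub e1) e0,
      intervalIntegral.integral_sub e2 e1]
    have h1 : ∫ t in a..b, (2 * lam * t) * gaussPdf t = 2 * lam * I1 := by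
      rw [hI1, ← intervalIntegral.integral_const_mul]
      congr 1; ext t; ring
    have h2 : ∫ t in a..b, lam ^ 2 * gaussPdf t = lam ^ 2 * I0 := by
      rw [hI0, ← intervalIntegral.integral_const_mul]
    rw [h1, h2]
  rw [hexp, hlam] at hnn
  have key : 0 ≤ I2 - 2 * (I1 / I0) * I1 + (I1 / I0) ^ 2 * I0 := hnn
  have h2 : 2 * (I1 / I0) * I1 = 2 * I1 ^ 2 / I0 := by ring
  have h3 : (I1 / I0) ^ 2 * I0 = I1 ^ 2 / I0 := by
    field_simp
  rw [h2, h3] at key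
  have h4 : 2 * I1 ^ 2 / I0 = 2 * (I1 ^ 2 / I0) := by ring
  have : I1 ^ 2 / I0 ≤ I2 := by linarith
  rw [div_le_iff₀ h0] at this
  nlinarith [this]

lemma integrable_pdf_affine {s : ℝ} (hs : 0 < s) (c : ℝ) :
    Integrable (fun y : ℝ => gaussPdf ((y - c) / s)) := by
  have h1 : Integrable (fun y : ℝ => gaussPdf (y / s)) := by
    have := integrable_gaussPdf.comp_div (by positivity : (s:ℝ) ≠ 0)
    exact this
  exact h1.comp_sub_right c

lemma integral_pdf_affine {s : ℝ} (hs : 0 < s) (c : ℝ) :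
    ∫ y : ℝ, gaussPdf ((y - c) / s) = s := by
  rw [integral_sub_right_eq_self (fun y => gaussPdf (y / s)) c]
  rw [MeasureTheory.Measure.integral_comp_div gaussPdf s]
  rw [integral_gaussPdf, abs_of_pos hs, smul_eq_mul, mul_one]

lemma t2_pdf_le (t : ℝ) : t ^ 2 * gaussPdf t ≤ 2 * Real.exp (-(t ^ 2) / 4) := by
  have h1 : t ^ 2 * Real.exp (-(t ^ 2) / 4) ≤ 4 := by
    have := Real.add_one_le_exp (t ^ 2 / 4)
    have hpos := Real.exp_pos (t ^ 2 / 4)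
    rw [show -(t^2)/4 = -(t^2/4) by ring, Real.exp_neg]
    rw [mul_inv_le_iff₀ hpos]
    nlinarith
  have hsp : (2:ℝ) ≤ Real.sqrt (2 * Real.pi) := by
    have h4 : (2:ℝ)^2 ≤ 2 * Real.pi := by nlinarith [Real.pi_gt_three]
    nlinarith [Real.sq_sqrt (by positivity : (0:ℝ) ≤ 2 * Real.pi), Real.sqrt_nonneg (2*Real.pi)]
  have hinv : (Real.sqrt (2 * Real.pi))⁻¹ ≤ 1/2 := by
    rw [inv_le_comm₀ sqrt2pi_pos (by norm_num)]
    simpa using hsp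
  unfold gaussPdf
  have hsplit : Real.exp (-(t ^ 2) / 2) = Real.exp (-(t ^ 2) / 4) * Real.exp (-(t ^ 2) / 4) := by
    rw [← Real.exp_add]; ring_nf
  rw [hsplit]
  have e4 := (Real.exp_pos (-(t ^ 2) / 4)).le
  have h0 := inv_pos.2 sqrt2pi_pos
  nlinarith [mul_le_mul_of_nonneg_right h1 e4, sq_nonneg t,
    mul_pos (Real.exp_pos (-(t ^ 2) / 4)) (Real.exp_pos (-(t ^ 2) / 4)),
    mul_le_mul_of_nonneg_right hinv (mul_nonneg (mul_nonneg (sq_nonneg t) e4) e4)]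

lemma exp_quarter_integrable : Integrable (fun t : ℝ => Real.exp (-(t ^ 2) / 4)) := by
  have h := integrable_exp_neg_mul_sq (by norm_num : (0:ℝ) < 1/4)
  exact h.congr (Filter.Eventually.of_forall fun t => by ring_nf)

lemma exp_eighth_integrable : Integrable (fun t : ℝ => Real.exp (-(t ^ 2) / 8)) := by
  have h := integrable_exp_neg_mul_sq (by norm_num : (0:ℝ) < 1/8)
  exact h.congr (Filter.Eventually.of_forall fun t => by ring_nf)

lemma integral_exp_eighth : ∫ t : ℝ, Real.exp (-(t ^ 2) / 8) = Real.sqrt (8 * Real.pi) := by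
  have : ∀ t : ℝ, Real.exp (-(t^2)/8) = Real.exp (-(1/8:ℝ) * t ^ 2) := fun t => by ring_nf
  simp_rw [this]
  rw [integral_gaussian, show Real.pi / (1/8) = 8 * Real.pi by ring]

lemma integrable_t2_pdf : Integrable (fun t : ℝ => t ^ 2 * gaussPdf t) := by
  refine (exp_quarter_integrable.const_mul 2).mono'
    (Continuous.aestronglyMeasurable ((continuous_pow 2).mul continuous_gaussPdf)) ?_
  refine Filter.Eventually.of_forall fun t => ?_
  rw [Real.norm_eq_abs, abs_of_nonneg (mul_nonneg (sq_nonneg t) (gaussPdf_nonneg t))]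
  exact t2_pdf_le t

lemma sqrt8pi_le : Real.sqrt (8 * Real.pi) ≤ 5.1 := by
  rw [show (5.1:ℝ) = Real.sqrt (5.1^2) by rw [Real.sqrt_sq]; norm_num]
  exact Real.sqrt_le_sqrt (by nlinarith [Real.pi_lt_d2])

lemma I2_tail_hi {a b : ℝ} (hab : a ≤ b) (hb : b ≤ 0) :
    ∫ t in a..b, t ^ 2 * gaussPdf t ≤ 11 * Real.exp (-(b ^ 2) / 8) := by
  rw [intervalIntegral.integral_of_le hab]
  have h1 : ∫ t in Set.Ioc a b, t ^ 2 * gaussPdf t ≤ ∫ t in Set.Iic b, t ^ 2 * gaussPdf t := by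
    apply MeasureTheory.setIntegral_mono_set integrable_t2_pdf.integrableOn
      (Filter.Eventually.of_forall fun t => mul_nonneg (sq_nonneg t) (gaussPdf_nonneg t))
    exact HasSubset.Subset.eventuallyLE Set.Ioc_subset_Iic_self
  have h2 : ∫ t in Set.Iic b, t ^ 2 * gaussPdf t
      ≤ ∫ t in Set.Iic b, 2 * Real.exp (-(b ^ 2) / 8) * Real.exp (-(t ^ 2) / 8) := by
    apply MeasureTheory.setIntegral_mono_on integrable_t2_pdf.integrableOn
      (((exp_eighth_integrable.const_mul _)).integrableOn) measurableSet_Iic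
    intro t ht
    simp only [Set.mem_Iic] at ht
    have hb2 : b ^ 2 ≤ t ^ 2 := by nlinarith
    calc t ^ 2 * gaussPdf t ≤ 2 * Real.exp (-(t ^ 2) / 4) := t2_pdf_le t
      _ = 2 * (Real.exp (-(t ^ 2) / 8) * Real.exp (-(t ^ 2) / 8)) := by
          rw [← Real.exp_add]; ring_nf
      _ ≤ 2 * Real.exp (-(b ^ 2) / 8) * Real.exp (-(t ^ 2) / 8) := by
          have := Real.exp_le_exp.2 (by linarith : -(t^2)/8 ≤ -(b^2)/8)
          nlinarith [(Real.exp_pos (-(t^2)/8)).le, (Real.exp_pos (-(b^2)/8)).le]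
  have h3 : ∫ t in Set.Iic b, 2 * Real.exp (-(b ^ 2) / 8) * Real.exp (-(t ^ 2) / 8)
      ≤ 2 * Real.exp (-(b ^ 2) / 8) * Real.sqrt (8 * Real.pi) := by
    rw [MeasureTheory.integral_const_mul]
    have h4 : ∫ t in Set.Iic b, Real.exp (-(t ^ 2) / 8) ≤ ∫ t : ℝ, Real.exp (-(t ^ 2) / 8) :=
      setIntegral_le_integral exp_eighth_integrable
        (Filter.Eventually.of_forall fun t => (Real.exp_pos _).le)
    rw [integral_exp_eighth] at h4
    nlinarith [(Real.exp_pos (-(b^2)/8)).le]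
  have h5 : 2 * Real.exp (-(b ^ 2) / 8) * Real.sqrt (8 * Real.pi) ≤ 11 * Real.exp (-(b^2)/8) := by
    nlinarith [sqrt8pi_le, (Real.exp_pos (-(b^2)/8)).le, Real.sqrt_nonneg (8*Real.pi)]
  linarith

lemma I2_tail_lo {a b : ℝ} (hab : a ≤ b) (ha : 0 ≤ a) :
    ∫ t in a..b, t ^ 2 * gaussPdf t ≤ 11 * Real.exp (-(a ^ 2) / 8) := by
  have h := I2_tail_hi (a := -b) (b := -a) (by linarith) (by linarith)
  rw [show ∫ t in -b..-a, t ^ 2 * gaussPdf t = ∫ t in a..b, t ^ 2 * gaussPdf t by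
    rw [← intervalIntegral.integral_comp_neg (fun t => t ^ 2 * gaussPdf t)]
    congr 1; ext t; rw [gaussPdf_neg]; ring] at h
  simpa using h

lemma I2_mid {a b : ℝ} (hab : a ≤ b) :
    ∫ t in a..b, t ^ 2 * gaussPdf t ≤ 8 := by
  rw [intervalIntegral.integral_of_le hab]
  have h1 : ∫ t in Set.Ioc a b, t ^ 2 * gaussPdf t ≤ ∫ t : ℝ, t ^ 2 * gaussPdf t :=
    setIntegral_le_integral integrable_t2_pdf
      (Filter.Eventually.of_forall fun t => mul_nonneg (sq_nonneg t) (gaussPdf_nonneg t))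
  have h2 : ∫ t : ℝ, t ^ 2 * gaussPdf t ≤ ∫ t : ℝ, 2 * Real.exp (-(t ^ 2) / 4) :=
    MeasureTheory.integral_mono integrable_t2_pdf (exp_quarter_integrable.const_mul 2)
      (fun t => t2_pdf_le t)
  have h3 : ∫ t : ℝ, 2 * Real.exp (-(t ^ 2) / 4) = 2 * Real.sqrt (4 * Real.pi) := by
    rw [MeasureTheory.integral_const_mul]
    have : ∀ t : ℝ, Real.exp (-(t^2)/4) = Real.exp (-(1/4:ℝ) * t ^ 2) := fun t => by ring_nf
    simp_rw [this]
    rw [integral_gaussian, show Real.pi / (1/4) = 4 * Real.pi by ring]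
  have h4 : Real.sqrt (4 * Real.pi) ≤ 3.6 := by
    rw [show (3.6:ℝ) = Real.sqrt (3.6^2) by rw [Real.sqrt_sq]; norm_num]
    exact Real.sqrt_le_sqrt (by nlinarith [Real.pi_lt_d2])
  linarith

lemma brak_eq {a b : ℝ} (hab : a < b) :
    brak a b = (∫ t in a..b, t ^ 2 * gaussPdf t)
      - (∫ t in a..b, t * gaussPdf t) ^ 2 / (∫ t in a..b, gaussPdf t) := by
  unfold brak
  rw [gaussCdf_interval hab.le, integral_t2_gaussPdf, integral_t_gaussPdf]
  have : (gaussPdf b - gaussPdf a) ^ 2 = (gaussPdf a - gaussPdf b) ^ 2 := by ring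
  rw [this]
  ring

lemma brak_nonneg {a b : ℝ} (hab : a < b) : 0 ≤ brak a b := by
  rw [brak_eq hab]
  have h0 := I0_pos hab
  have := cauchy_schwarz_interval hab
  rw [sub_nonneg, div_le_iff₀ h0]
  nlinarith

lemma brak_le_I2 {a b : ℝ} (hab : a < b) :
    brak a b ≤ ∫ t in a..b, t ^ 2 * gaussPdf t := by
  rw [brak_eq hab]
  have h0 := I0_pos hab
  have : 0 ≤ (∫ t in a..b, t * gaussPdf t) ^ 2 / (∫ t in a..b, gaussPdf t) :=
    div_nonneg (sq_nonneg _) h0.le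
  linarith

lemma I0_ge_phi1 {a b : ℝ} (ha : a ≤ 0) (hb : 0 ≤ b) (h1 : 1 ≤ b ∨ a ≤ -1) :
    gaussPdf 1 ≤ ∫ t in a..b, gaussPdf t := by
  have hab : a ≤ b := le_trans ha hb
  rw [intervalIntegral.integral_of_le hab]
  rcases h1 with h | h
  · have hsub : Set.Ioc (0:ℝ) 1 ⊆ Set.Ioc a b := Set.Ioc_subset_Ioc ha h
    have h2 : ∫ t in Set.Ioc (0:ℝ) 1, gaussPdf t ≤ ∫ t in Set.Ioc a b, gaussPdf t := by
      apply MeasureTheory.setIntegral_mono_set integrable_gaussPdf.integrableOn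
        (Filter.Eventually.of_forall fun t => gaussPdf_nonneg t)
        (HasSubset.Subset.eventuallyLE hsub)
    refine le_trans ?_ h2
    have h3 : ∫ t in Set.Ioc (0:ℝ) 1, (gaussPdf 1) ≤ ∫ t in Set.Ioc (0:ℝ) 1, gaussPdf t := by
      apply MeasureTheory.setIntegral_mono_on
        (integrableOn_const (by simp [Real.volume_Ioc]))
        integrable_gaussPdf.integrableOn measurableSet_Ioc
      intro t ht
      simp only [Set.mem_Ioc] at ht
      exact gaussPdf_anti (by rw [abs_one, abs_of_pos ht.1]; exact ht.2)
    calc gaussPdf 1 = ∫ t in Set.Ioc (0:ℝ) 1, (gaussPdf 1) := by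
          simp [Real.volume_Ioc]
      _ ≤ _ := h3
  · have hsub : Set.Ioc (-1:ℝ) 0 ⊆ Set.Ioc a b := Set.Ioc_subset_Ioc h hb
    have h2 : ∫ t in Set.Ioc (-1:ℝ) 0, gaussPdf t ≤ ∫ t in Set.Ioc a b, gaussPdf t := by
      apply MeasureTheory.setIntegral_mono_set integrable_gaussPdf.integrableOn
        (Filter.Eventually.of_forall fun t => gaussPdf_nonneg t)
        (HasSubset.Subset.eventuallyLE hsub)
    refine le_trans ?_ h2
    have h3 : ∫ t in Set.Ioc (-1:ℝ) 0, (gaussPdf 1) ≤ ∫ t in Set.Ioc (-1:ℝ) 0, gaussPdf t := by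
      apply MeasureTheory.setIntegral_mono_on
        (integrableOn_const (by simp [Real.volume_Ioc]))
        integrable_gaussPdf.integrableOn measurableSet_Ioc
      intro t ht
      simp only [Set.mem_Ioc] at ht
      refine gaussPdf_anti ?_
      rw [abs_one, abs_of_nonpos ht.2]
      linarith [ht.1]
    calc gaussPdf 1 = ∫ t in Set.Ioc (-1:ℝ) 0, (gaussPdf 1) := by
          simp [Real.volume_Ioc]
      _ ≤ _ := h3

lemma gaussPdf_zero_eq : gaussPdf 0 = (Real.sqrt (2 * Real.pi))⁻¹ := by
  unfold gaussPdf; norm_num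

lemma gaussPdf_one_eq : gaussPdf 0 = Real.exp (1/2) * gaussPdf 1 := by
  unfold gaussPdf
  rw [← mul_assoc, mul_comm (Real.exp (1/2)), mul_assoc, ← Real.exp_add]
  norm_num

lemma exp_half_pdf (x : ℝ) : Real.exp (-(x ^ 2) / 2) / 2
    = (Real.sqrt (2 * Real.pi) / 2) * gaussPdf x := by
  unfold gaussPdf
  rw [← mul_assoc]
  rw [div_mul_eq_mul_div, mul_inv_cancel₀ sqrt2pi_pos.ne']
  ring

lemma brak_ge {a b : ℝ} (ha : a ≤ 0) (hb : 0 ≤ b) (h1 : 1 ≤ b ∨ a ≤ -1) :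
    1 - ((Real.sqrt (2 * Real.pi) / 2) * (gaussPdf a + gaussPdf b)
        + (b * gaussPdf b + (-a) * gaussPdf a)
        + Real.exp (1/2) * (gaussPdf a + gaussPdf b)) ≤ brak a b := by
  have hab : a < b := by rcases h1 with h | h <;> linarith
  have h0 := I0_pos hab
  rw [brak_eq hab]
  set I0 := ∫ t in a..b, gaussPdf t with hI0
  set I1 := ∫ t in a..b, t * gaussPdf t with hI1
  -- I0 lower bound via tails
  have htail : 1 - ((Real.sqrt (2 * Real.pi) / 2) * (gaussPdf a + gaussPdf b)) ≤ I0 := by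
    have hdec : I0 = 1 - (∫ t in Set.Ioi b, gaussPdf t) - (∫ t in Set.Iic a, gaussPdf t) := by
      rw [hI0, ← gaussCdf_interval hab.le, ← one_sub_gaussCdf]
      unfold gaussCdf
      ring
    have t1 := tail_hi_le hb
    have t2 := tail_lo_le ha
    rw [exp_half_pdf] at t1 t2
    rw [hdec]
    have := mul_nonneg (div_nonneg sqrt2pi_pos.le (by norm_num : (0:ℝ) ≤ 2)) (gaussPdf_nonneg a)
    nlinarith
  -- I1^2/I0 upper bound
  have hphi1 : gaussPdf 1 ≤ I0 := I0_ge_phi1 ha hb h1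
  have hp1 := gaussPdf_pos 1
  have hCS : I1 ^ 2 / I0 ≤ Real.exp (1/2) * (gaussPdf a + gaussPdf b) := by
    have hI1eq : I1 = gaussPdf a - gaussPdf b := integral_t_gaussPdf a b
    have hsq : I1 ^ 2 ≤ gaussPdf 0 * (gaussPdf a + gaussPdf b) := by
      rw [hI1eq]
      have h01 : gaussPdf a ≤ gaussPdf 0 := gaussPdf_anti (by simp [abs_nonneg])
      have h02 : gaussPdf b ≤ gaussPdf 0 := gaussPdf_anti (by simp [abs_nonneg])
      nlinarith [gaussPdf_nonneg a, gaussPdf_nonneg b]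
    have hdiv : I1 ^ 2 / I0 ≤ I1 ^ 2 / gaussPdf 1 :=
      div_le_div_of_nonneg_left (sq_nonneg _) hp1 hphi1
    refine le_trans hdiv ?_
    rw [div_le_iff₀ hp1]
    calc I1 ^ 2 ≤ gaussPdf 0 * (gaussPdf a + gaussPdf b) := hsq
      _ = Real.exp (1/2) * (gaussPdf a + gaussPdf b) * gaussPdf 1 := by
          rw [gaussPdf_one_eq]; ring
  -- I2 via parts
  have hI2 : (∫ t in a..b, t ^ 2 * gaussPdf t) = I0 + (a * gaussPdf a - b * gaussPdf b) :=
    integral_t2_gaussPdf a b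
  rw [hI2]
  have : -(a * gaussPdf a) = (-a) * gaussPdf a := by ring
  linarith

lemma sqrt2pi_ge_two : (2:ℝ) ≤ Real.sqrt (2 * Real.pi) := by
  have h4 : (2:ℝ)^2 ≤ 2 * Real.pi := by nlinarith [Real.pi_gt_three]
  nlinarith [Real.sq_sqrt (by positivity : (0:ℝ) ≤ 2 * Real.pi), Real.sqrt_nonneg (2*Real.pi)]

lemma sqrt2pi_le : Real.sqrt (2 * Real.pi) ≤ 2.6 := by
  rw [show (2.6:ℝ) = Real.sqrt (2.6^2) by rw [Real.sqrt_sq]; norm_num]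
  exact Real.sqrt_le_sqrt (by nlinarith [Real.pi_lt_d2])

lemma exp_half_le : Real.exp (1/2 : ℝ) ≤ 1.7 := by
  have h : Real.exp (1/2 : ℝ) * Real.exp (1/2 : ℝ) = Real.exp 1 := by
    rw [← Real.exp_add]; norm_num
  nlinarith [Real.exp_one_lt_d9, (Real.exp_pos (1/2 : ℝ)).le]

lemma gaussPdf_zero_le : gaussPdf 0 ≤ 1/2 := by
  rw [gaussPdf_zero_eq, inv_le_comm₀ sqrt2pi_pos (by norm_num)]
  simpa using sqrt2pi_ge_two

set_option maxHeartbeats 1000000 in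
/-- The expected variance of a truncated normal posterior with location `ȳ`,
scale `σ²/n` and domain `[−R, R]`, where `ȳ` has density `(1/(2R))(Φ(b(ȳ)) − Φ(a(ȳ)))`,
is at least `(σ²/n)(1 − 4σ/(√n R))`. -/
theorem expected_truncated_posterior_variance_ge
    (σ R : ℝ) (hσ : 0 < σ) (hR : 0 < R) (n : ℕ) (hn : 1 ≤ n)
    (a b : ℝ → ℝ)
    (ha : ∀ ybar, a ybar = -(Real.sqrt n * (R + ybar) / σ))
    (hb : ∀ ybar, b ybar = Real.sqrt n * (R - ybar) / σ) :
    (σ ^ 2 / n) * (1 - 4 * σ / (Real.sqrt n * R)) ≤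
      ∫ ybar : ℝ,
        (1 / (2 * R)) * (σ ^ 2 / n) *
          ((gaussCdf (b ybar) - gaussCdf (a ybar))
            - (b ybar * gaussPdf (b ybar) - a ybar * gaussPdf (a ybar))
            - (gaussPdf (b ybar) - gaussPdf (a ybar)) ^ 2 /
                (gaussCdf (b ybar) - gaussCdf (a ybar))) := by
  have hn0 : (0:ℝ) < (n:ℝ) := by
    have : 0 < n := Nat.lt_of_lt_of_le Nat.zero_lt_one hn
    exact_mod_cast this
  have hsqn : (0:ℝ) < Real.sqrt n := Real.sqrt_pos.2 hn0
  set s : ℝ := σ / Real.sqrt n with hs_def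
  have hs : 0 < s := div_pos hσ hsqn
  have hbf : ∀ y, b y = (R - y) / s := by
    intro y; rw [hb, hs_def]; field_simp
  have haf : ∀ y, a y = -((R + y) / s) := by
    intro y; rw [ha, hs_def]; field_simp
  have haby : ∀ y, a y < b y := by
    intro y
    rw [hbf, haf]
    have h2R : 0 < 2*R/s := by positivity
    have hsum : (R - y)/s + (R + y)/s = 2*R/s := by field_simp; ring
    linarith
  have hs2 : (σ:ℝ) ^ 2 / (n:ℝ) = s ^ 2 := by
    rw [hs_def, div_pow, Real.sq_sqrt hn0.le]
  have hC : (0:ℝ) < 1 / (2*R) * (σ^2 / (n:ℝ)) := by rw [hs2]; positivity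
  show (σ ^ 2 / n) * (1 - 4 * σ / (Real.sqrt n * R)) ≤
      ∫ y : ℝ, (1 / (2 * R)) * (σ ^ 2 / n) * brak (a y) (b y)
  have hnn : ∀ y, 0 ≤ (1 / (2*R)) * (σ^2/(n:ℝ)) * brak (a y) (b y) :=
    fun y => mul_nonneg hC.le (brak_nonneg (haby y))
  rcases le_or_gt (Real.sqrt n * R) (4 * σ) with hcase | hcase
  · have h1 : (1:ℝ) ≤ 4 * σ / (Real.sqrt n * R) := by
      rw [le_div_iff₀ (by positivity)]; linarith
    have hL : (σ^2 / (n:ℝ)) * (1 - 4 * σ / (Real.sqrt n * R)) ≤ 0 := by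
      have h2 : (0:ℝ) ≤ σ^2 / (n:ℝ) := by positivity
      nlinarith
    exact le_trans hL (integral_nonneg hnn)
  · have h4s : 4 * s < R := by
      have h1 : 4 * s = 4 * σ / Real.sqrt n := by rw [hs_def]; ring
      rw [h1, div_lt_iff₀ hsqn]; nlinarith
  -- continuity facts
    have hcb : Continuous b := by
      have : b = fun y => (R - y) / s := funext hbf
      rw [this]; exact (continuous_const.sub continuous_id).div_const s
    have hca : Continuous a := by
      have : a = fun y => -((R + y) / s) := funext haf
      rw [this]; exact ((continuous_const.add continuous_id).div_const s).neg
    have hden : ∀ y, 0 < gaussCdf (b y) - gaussCdf (a y) := fun y => by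
      rw [gaussCdf_interval (haby y).le]; exact I0_pos (haby y)
    have hcbrak : Continuous fun y => brak (a y) (b y) := by
      unfold brak
      have h1 : Continuous fun y => gaussCdf (b y) - gaussCdf (a y) :=
        (continuous_gaussCdf.comp hcb).sub (continuous_gaussCdf.comp hca)
      have h2 : Continuous fun y => b y * gaussPdf (b y) - a y * gaussPdf (a y) :=
        (hcb.mul (continuous_gaussPdf.comp hcb)).sub (hca.mul (continuous_gaussPdf.comp hca))
      have h3 : Continuous fun y => (gaussPdf (b y) - gaussPdf (a y)) ^ 2 :=
        ((continuous_gaussPdf.comp hcb).sub (continuous_gaussPdf.comp hca)).pow 2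
      exact (h1.sub h2).sub (h3.div h1 fun y => (hden y).ne')
    have hcf : Continuous fun y => (1 / (2*R)) * (σ^2/(n:ℝ)) * brak (a y) (b y) :=
      continuous_const.mul hcbrak
  -- integrability via domination
    have hGb : Integrable fun y : ℝ => 11 * Real.exp (-((b y)^2)/8) := by
      have base : Integrable (fun y : ℝ => Real.exp (-(1/(8*s^2)) * (y - R)^2)) :=
        (integrable_exp_neg_mul_sq (by positivity)).comp_sub_right R
      refine (base.const_mul 11).congr (Filter.Eventually.of_forall fun y => ?_)
      show 11 * Real.exp (-(1/(8*s^2)) * (y - R)^2) = 11 * Real.exp (-((b y)^2)/8)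
      rw [hbf]
      congr 1
      rw [div_pow]
      rw [hs_def]; ring
    have hGa : Integrable fun y : ℝ => 11 * Real.exp (-((a y)^2)/8) := by
      have base : Integrable (fun y : ℝ => Real.exp (-(1/(8*s^2)) * (y - (-R))^2)) :=
        (integrable_exp_neg_mul_sq (by positivity)).comp_sub_right (-R)
      refine (base.const_mul 11).congr (Filter.Eventually.of_forall fun y => ?_)
      show 11 * Real.exp (-(1/(8*s^2)) * (y - (-R))^2) = 11 * Real.exp (-((a y)^2)/8)
      rw [haf]
      congr 1
      rw [neg_pow, div_pow]
      rw [hs_def]; ring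
    have hGind : Integrable ((Set.Icc (-R) R).indicator (fun _ => (8:ℝ))) := by
      rw [integrable_indicator_iff measurableSet_Icc]
      exact integrableOn_const measure_Icc_lt_top.ne
    have hGint : Integrable (fun y => (1/(2*R))*(σ^2/(n:ℝ)) *
        ((Set.Icc (-R) R).indicator (fun _ => (8:ℝ)) y
          + 11 * Real.exp (-((b y)^2)/8) + 11 * Real.exp (-((a y)^2)/8))) :=
      (((hGind.add hGb).add hGa).const_mul _)
    have hbound : ∀ y, ‖(1 / (2*R)) * (σ^2/(n:ℝ)) * brak (a y) (b y)‖
        ≤ (1/(2*R))*(σ^2/(n:ℝ)) *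
          ((Set.Icc (-R) R).indicator (fun _ => (8:ℝ)) y
            + 11 * Real.exp (-((b y)^2)/8) + 11 * Real.exp (-((a y)^2)/8)) := by
      intro y
      rw [Real.norm_eq_abs, abs_of_nonneg (hnn y)]
      apply mul_le_mul_of_nonneg_left _ hC.le
      have hb2 := brak_le_I2 (haby y)
      have hind : 0 ≤ (Set.Icc (-R) R).indicator (fun _ => (8:ℝ)) y :=
        Set.indicator_nonneg (fun _ _ => by norm_num) y
      have hexpb : (0:ℝ) ≤ 11 * Real.exp (-((b y)^2)/8) := by positivity
      have hexpa : (0:ℝ) ≤ 11 * Real.exp (-((a y)^2)/8) := by positivity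
      rcases le_or_gt y (-R) with hy | hy
      · have ha0 : 0 ≤ a y := by
          rw [haf, neg_nonneg]
          exact div_nonpos_of_nonpos_of_nonneg (by linarith) hs.le
        have := I2_tail_lo (haby y).le ha0
        linarith
      · rcases le_or_gt R y with hy2 | hy2
        · have hb0 : b y ≤ 0 := by
            rw [hbf]
            exact div_nonpos_of_nonpos_of_nonneg (by linarith) hs.le
          have := I2_tail_hi (haby y).le hb0
          linarith
        · have hmem : y ∈ Set.Icc (-R) R := ⟨hy.le, hy2.le⟩
          rw [Set.indicator_of_mem hmem]
          have := I2_mid (haby y).le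
          linarith
    have hfint : Integrable fun y => (1 / (2*R)) * (σ^2/(n:ℝ)) * brak (a y) (b y) :=
      hGint.mono' hcf.aestronglyMeasurable (Filter.Eventually.of_forall hbound)
  -- chain of bounds
    have s1 : ∫ y in Set.Ioc (-R) R, (1 / (2*R)) * (σ^2/(n:ℝ)) * brak (a y) (b y)
        ≤ ∫ y, (1 / (2*R)) * (σ^2/(n:ℝ)) * brak (a y) (b y) :=
      setIntegral_le_integral hfint (Filter.Eventually.of_forall hnn)
    have s2 : ∫ y in (-R)..R, (1 / (2*R)) * (σ^2/(n:ℝ)) * brak (a y) (b y)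
        = ∫ y in Set.Ioc (-R) R, (1 / (2*R)) * (σ^2/(n:ℝ)) * brak (a y) (b y) :=
      intervalIntegral.integral_of_le (by linarith)
    have s3 : ∫ y in (-R)..R, (1 / (2*R)) * (σ^2/(n:ℝ)) * brak (a y) (b y)
        = (1 / (2*R)) * (σ^2/(n:ℝ)) * ∫ y in (-R)..R, brak (a y) (b y) :=
      intervalIntegral.integral_const_mul _ _
  -- deficit function
    set c1 : ℝ := Real.sqrt (2 * Real.pi) / 2 + Real.exp (1/2) with hc1
    have hc1nn : 0 ≤ c1 := by
      have h1 := sqrt2pi_pos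
      have h2 := (Real.exp_pos (1/2:ℝ)).le
      rw [hc1]; positivity
    set D : ℝ → ℝ := fun y => c1 * gaussPdf (a y) + c1 * gaussPdf (b y)
      + b y * gaussPdf (b y) + (-(a y)) * gaussPdf (a y) with hD
    have hDc : Continuous D := by
      rw [hD]
      exact (((continuous_const.mul (continuous_gaussPdf.comp hca)).add
        (continuous_const.mul (continuous_gaussPdf.comp hcb))).add
        (hcb.mul (continuous_gaussPdf.comp hcb))).add
        (hca.neg.mul (continuous_gaussPdf.comp hca))
    have s4 : ∫ y in (-R)..R, (1 - D y) ≤ ∫ y in (-R)..R, brak (a y) (b y) := by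
      apply intervalIntegral.integral_mono_on (by linarith : -R ≤ R)
        ((continuous_const.sub hDc).intervalIntegrable _ _)
        (hcbrak.intervalIntegrable _ _)
      intro y hy
      have hya : a y ≤ 0 := by
        rw [haf, neg_nonpos]
        exact div_nonneg (by linarith [hy.1]) hs.le
      have hyb : 0 ≤ b y := by
        rw [hbf]
        exact div_nonneg (by linarith [hy.2]) hs.le
      have hRs : 4 < R / s := by rw [lt_div_iff₀ hs]; linarith
      have h1 : 1 ≤ b y ∨ a y ≤ -1 := by
        rcases le_or_gt y 0 with hy0 | hy0
        · left
          rw [hbf]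
          have h2 : R / s ≤ (R - y) / s := by gcongr <;> linarith
          linarith
        · right
          rw [haf, neg_le]
          have h2 : R / s ≤ (R + y) / s := by gcongr <;> linarith
          linarith
      have hkey := brak_ge hya hyb h1
      refine le_trans (le_of_eq ?_) hkey
      rw [hD, hc1]
      simp only [Pi.sub_apply]
      ring
  -- the four substitution integrals
    have A1 : ∫ y in (-R)..R, gaussPdf (b y) ≤ s := by
      have e1 : ∀ y : ℝ, gaussPdf (b y) = gaussPdf ((y - R)/s) := fun y => by
        rw [hbf, show (R - y)/s = -((y - R)/s) by ring, gaussPdf_neg]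
      simp_rw [e1]
      rw [intervalIntegral.integral_of_le (by linarith : -R ≤ R)]
      refine le_trans (setIntegral_le_integral (integrable_pdf_affine hs R)
        (Filter.Eventually.of_forall fun y => gaussPdf_nonneg _)) ?_
      exact le_of_eq (integral_pdf_affine hs R)
    have A2 : ∫ y in (-R)..R, gaussPdf (a y) ≤ s := by
      have e2 : ∀ y : ℝ, gaussPdf (a y) = gaussPdf ((y - (-R))/s) := fun y => by
        rw [haf, gaussPdf_neg, show (R + y)/s = (y - (-R))/s by ring]
      simp_rw [e2]
      rw [intervalIntegral.integral_of_le (by linarith : -R ≤ R)]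
      refine le_trans (setIntegral_le_integral (integrable_pdf_affine hs (-R))
        (Filter.Eventually.of_forall fun y => gaussPdf_nonneg _)) ?_
      exact le_of_eq (integral_pdf_affine hs (-R))
    have A3 : ∫ y in (-R)..R, b y * gaussPdf (b y) ≤ s * gaussPdf 0 := by
      have e3 : ∀ y : ℝ, b y * gaussPdf (b y) = (fun x => x/s * gaussPdf (x/s)) (R - y) :=
        fun y => by simp only; rw [hbf]
      simp_rw [e3]
      rw [intervalIntegral.integral_comp_sub_left (fun x => x/s * gaussPdf (x/s)) R]
      rw [show R - R = (0:ℝ) by ring, show R - -R = 2*R by ring]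
      rw [intervalIntegral.integral_comp_div (fun u => u * gaussPdf u) hs.ne']
      rw [show (0:ℝ)/s = 0 by simp]
      rw [integral_t_gaussPdf, smul_eq_mul]
      nlinarith [gaussPdf_nonneg (2*R/s), hs.le, gaussPdf_nonneg 0]
    have A4 : ∫ y in (-R)..R, (-(a y)) * gaussPdf (a y) ≤ s * gaussPdf 0 := by
      have e5 : ∀ y : ℝ, (-(a y)) * gaussPdf (a y) = (fun x => x/s * gaussPdf (x/s)) (y + R) :=
        fun y => by
          simp only
          rw [haf, gaussPdf_neg, neg_neg, show (R + y)/s = (y+R)/s by ring]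
      simp_rw [e5]
      rw [intervalIntegral.integral_comp_add_right (fun x => x/s * gaussPdf (x/s)) R]
      rw [show -R + R = (0:ℝ) by ring, show R + R = 2*R by ring]
      rw [intervalIntegral.integral_comp_div (fun u => u * gaussPdf u) hs.ne']
      rw [show (0:ℝ)/s = 0 by simp]
      rw [integral_t_gaussPdf, smul_eq_mul]
      nlinarith [gaussPdf_nonneg (2*R/s), hs.le, gaussPdf_nonneg 0]
  -- deficit integral bound
    have hIa : IntervalIntegrable (fun y => gaussPdf (a y)) volume (-R) R :=
      (continuous_gaussPdf.comp hca).intervalIntegrable _ _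
    have hIb : IntervalIntegrable (fun y => gaussPdf (b y)) volume (-R) R :=
      (continuous_gaussPdf.comp hcb).intervalIntegrable _ _
    have hIbb : IntervalIntegrable (fun y => b y * gaussPdf (b y)) volume (-R) R :=
      (hcb.mul (continuous_gaussPdf.comp hcb)).intervalIntegrable _ _
    have hIaa : IntervalIntegrable (fun y => (-(a y)) * gaussPdf (a y)) volume (-R) R :=
      (hca.neg.mul (continuous_gaussPdf.comp hca)).intervalIntegrable _ _
    have s5 : 2*R - 8*s ≤ ∫ y in (-R)..R, (1 - D y) := by
      have hDint : IntervalIntegrable D volume (-R) R := hDc.intervalIntegrable _ _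
      rw [intervalIntegral.integral_sub (intervalIntegrable_const) hDint,
        intervalIntegral.integral_const, smul_eq_mul, mul_one]
      have hDval : ∫ y in (-R)..R, D y ≤ 8 * s := by
        rw [hD]
        rw [intervalIntegral.integral_add (((hIa.const_mul c1).add (hIb.const_mul c1)).add hIbb) hIaa]
        rw [intervalIntegral.integral_add ((hIa.const_mul c1).add (hIb.const_mul c1)) hIbb]
        rw [intervalIntegral.integral_add (hIa.const_mul c1) (hIb.const_mul c1)]
        rw [intervalIntegral.integral_const_mul, intervalIntegral.integral_const_mul]
        have hc1le : c1 ≤ 3 := by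
          rw [hc1]; linarith [sqrt2pi_le, exp_half_le]
        have t1 : c1 * (∫ y in (-R)..R, gaussPdf (a y)) ≤ c1 * s :=
          mul_le_mul_of_nonneg_left A2 hc1nn
        have t2 : c1 * (∫ y in (-R)..R, gaussPdf (b y)) ≤ c1 * s :=
          mul_le_mul_of_nonneg_left A1 hc1nn
        have t3 : c1 * s ≤ 3 * s := by nlinarith
        have t4 : s * gaussPdf 0 ≤ s * (1/2) := by
          nlinarith [gaussPdf_zero_le, hs.le]
        linarith
      linarith
  -- final assembly
    have key : (1/(2*R))*(σ^2/(n:ℝ)) * (2*R - 8*s)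
        ≤ ∫ y, (1 / (2*R)) * (σ^2/(n:ℝ)) * brak (a y) (b y) := by
      calc (1/(2*R))*(σ^2/(n:ℝ)) * (2*R - 8*s)
          ≤ (1/(2*R))*(σ^2/(n:ℝ)) * ∫ y in (-R)..R, brak (a y) (b y) :=
            mul_le_mul_of_nonneg_left (le_trans s5 s4) hC.le
        _ = ∫ y in (-R)..R, (1 / (2*R)) * (σ^2/(n:ℝ)) * brak (a y) (b y) := s3.symm
        _ = ∫ y in Set.Ioc (-R) R, (1 / (2*R)) * (σ^2/(n:ℝ)) * brak (a y) (b y) := s2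
        _ ≤ _ := s1
    have heq : (σ^2/(n:ℝ)) * (1 - 4*σ/(Real.sqrt n * R))
        = (1/(2*R))*(σ^2/(n:ℝ)) * (2*R - 8*s) := by
      rw [hs2, hs_def]
      field_simp
      ring
    rw [heq]
    exact key
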